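/- Fix σ > 1/2 and let g : ℝ → ℝ satisfy g(T) > T for all large T. Assume: (i) (quotient formula) ∫_T^{g(T)} |ζ(1/2+it)|² dt / ∫_T^{g(T)} |ζ(σ+it)|² dt = (1/ζ(2σ))·ln T + O(1) as T → ∞; (ii) (t_ν) is a Gram sequence satisfying the second Moser asymptotic. For positive integers x, y, z, n with n ≥ 3 set F = (xⁿ + yⁿ)/zⁿ and K_F = 4π³·F/ζ(2σ)⁵, and let E(τ) = (1/τ)·(∫_{K_F·τ}^{g(K_F·τ)} |ζ(σ+it)|² dt)⁵ · (∫_{K_F·τ}^{g(K_F·τ)} |ζ(1/2+it)|² dt)^{−5} · Σ_{ν : K_F·τ ≤ t_ν ≤ 2·K_F·τ} |ζ(1/2 + i t_ν)|⁴. Then the following are equivalent: (a) for all positive integers x, y, z, n with n ≥ 3, E(τ) does not converge to 1 as τ → ∞; (b) for all positive integers x, y, z, n with n ≥ 3, xⁿ + yⁿ ≠ zⁿ (the Fermat–Wiles theorem). -/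

import Mathlib

open Filter Topology MeasureTheory

/-- |ζ(σ+it)|² -/
noncomputable def zsq (σ : ℝ) (t : ℝ) : ℝ :=
  ‖riemannZeta (↑σ + ↑t * Complex.I)‖ ^ 2

/-- Riemann–Siegel theta function θ(t) = Im log Γ(1/4 + it/2) − (t/2)·ln π. -/
noncomputable def RStheta (t : ℝ) : ℝ :=
  (Complex.log (Complex.Gamma (1/4 + (↑t/2) * Complex.I))).im - (t/2) * Real.log Real.pi

/-- A Gram sequence: strictly increasing positive reals tending to ∞ with θ(t_ν) = π·ν. -/
def IsGramSeq (tν : ℕ → ℝ) : Prop :=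
  StrictMono tν ∧ (∀ ν : ℕ, 1 ≤ ν → 0 < tν ν) ∧ Filter.Tendsto tν Filter.atTop Filter.atTop ∧
    ∀ ν : ℕ, 1 ≤ ν → RStheta (tν ν) = Real.pi * ν

/-- The sum Σ_{T ≤ t_ν ≤ 2T} |ζ(1/2+it_ν)|⁴. -/
noncomputable def MoserSum (tν : ℕ → ℝ) (T : ℝ) : ℝ :=
  ∑' ν : ℕ, if T ≤ tν ν ∧ tν ν ≤ 2 * T
    then ‖riemannZeta (1/2 + ↑(tν ν) * Complex.I)‖ ^ 4 else 0

/-- The second Moser asymptotic (1991):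
Σ_{T ≤ t_ν ≤ 2T} |ζ(1/2+it_ν)|⁴ = (1/(4π³))·T·ln⁵T·(1+O(1/ln T)). -/
def MoserAsymp (tν : ℕ → ℝ) : Prop :=
  ∃ C : ℝ, ∀ᶠ T in Filter.atTop,
    |MoserSum tν T / (1 / (4 * Real.pi ^ 3) * T * Real.log T ^ 5) - 1| ≤ C / Real.log T

lemma zeta_re_pos {x : ℝ} (hx : 1 < x) : 0 < (riemannZeta (x:ℂ)).re := by
  have hx' : 1 < (x:ℂ).re := by simpa using hx
  rw [zeta_eq_tsum_one_div_nat_add_one_cpow hx']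
  have hsum : Summable (fun n : ℕ => 1 / ((n:ℝ) + 1) ^ x) := by
    simpa using (summable_nat_add_iff 1).mpr (Real.summable_one_div_nat_rpow.mpr hx)
  have heq : (fun n : ℕ => 1 / ((n:ℂ) + 1) ^ (x:ℂ)) =
      fun n : ℕ => ((1 / ((n:ℝ) + 1) ^ x : ℝ) : ℂ) := by
    funext n
    rw [Complex.ofReal_div, Complex.ofReal_cpow (by positivity)]
    push_cast
    ring
  rw [heq, ← Complex.ofReal_tsum, Complex.ofReal_re]
  exact Summable.tsum_pos hsum (fun n => by positivity) 0 (by positivity)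

lemma alg (a b m τ L c F : ℝ) (hτ : τ ≠ 0) (hL : L ≠ 0) (hc : c ≠ 0) (hF : F ≠ 0) :
    1/τ * a^5 * ((b^5)⁻¹) * m
      = F * (m / (1/(4*Real.pi^3) * (4*Real.pi^3*F/c^5*τ) * L^5)) * (((b/a) / (1/c*L))^5)⁻¹ := by
  have hπ : Real.pi ≠ 0 := Real.pi_ne_zero
  by_cases ha : a = 0
  · simp [ha]
  by_cases hb : b = 0
  · simp [hb]
  field_simp

theorem zeta_equivalent_FLT_second (σ : ℝ) (hσ : 1/2 < σ) (g : ℝ → ℝ)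
    (hg : ∀ᶠ T in atTop, T < g T)
    (hquot : ∃ C : ℝ, ∀ᶠ T in atTop,
      |(∫ t in T..(g T), zsq (1/2) t) / (∫ t in T..(g T), zsq σ t) -
        (1 / (riemannZeta (2 * (σ:ℂ))).re) * Real.log T| ≤ C)
    (tν : ℕ → ℝ) (hgram : IsGramSeq tν) (hmoser : MoserAsymp tν) :
    ((∀ x y z n : ℕ, 0 < x → 0 < y → 0 < z → 3 ≤ n →
      ¬ Tendsto (fun τ : ℝ =>
        (1/τ) *
        ((∫ t in (4 * Real.pi ^ 3 * (((x:ℝ)^n + (y:ℝ)^n) / (z:ℝ)^n) / (riemannZeta (2 * (σ:ℂ))).re ^ 5 * τ)..(g (4 * Real.pi ^ 3 * (((x:ℝ)^n + (y:ℝ)^n) / (z:ℝ)^n) / (riemannZeta (2 * (σ:ℂ))).re ^ 5 * τ)), zsq σ t) ^ 5) *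
        (((∫ t in (4 * Real.pi ^ 3 * (((x:ℝ)^n + (y:ℝ)^n) / (z:ℝ)^n) / (riemannZeta (2 * (σ:ℂ))).re ^ 5 * τ)..(g (4 * Real.pi ^ 3 * (((x:ℝ)^n + (y:ℝ)^n) / (z:ℝ)^n) / (riemannZeta (2 * (σ:ℂ))).re ^ 5 * τ)), zsq (1/2) t) ^ 5)⁻¹) *
        MoserSum tν (4 * Real.pi ^ 3 * (((x:ℝ)^n + (y:ℝ)^n) / (z:ℝ)^n) / (riemannZeta (2 * (σ:ℂ))).re ^ 5 * τ))
        atTop (nhds 1))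
    ↔ (∀ x y z n : ℕ, 0 < x → 0 < y → 0 < z → 3 ≤ n → x^n + y^n ≠ z^n)) := by
  -- setup
  set c : ℝ := (riemannZeta (2 * (σ:ℂ))).re with hc_def
  have hc : 0 < c := by
    have h2 : (2 * (σ:ℂ)) = (((2*σ : ℝ)):ℂ) := by push_cast; ring
    rw [hc_def, h2]
    exact zeta_re_pos (by linarith)
  -- the key convergence fact
  have key : ∀ x y z n : ℕ, 0 < x → 0 < y → 0 < z → 3 ≤ n →
      Tendsto (fun τ : ℝ =>
        (1/τ) *
        ((∫ t in (4 * Real.pi ^ 3 * (((x:ℝ)^n + (y:ℝ)^n) / (z:ℝ)^n) / c ^ 5 * τ)..(g (4 * Real.pi ^ 3 * (((x:ℝ)^n + (y:ℝ)^n) / (z:ℝ)^n) / c ^ 5 * τ)), zsq σ t) ^ 5) *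
        (((∫ t in (4 * Real.pi ^ 3 * (((x:ℝ)^n + (y:ℝ)^n) / (z:ℝ)^n) / c ^ 5 * τ)..(g (4 * Real.pi ^ 3 * (((x:ℝ)^n + (y:ℝ)^n) / (z:ℝ)^n) / c ^ 5 * τ)), zsq (1/2) t) ^ 5)⁻¹) *
        MoserSum tν (4 * Real.pi ^ 3 * (((x:ℝ)^n + (y:ℝ)^n) / (z:ℝ)^n) / c ^ 5 * τ))
        atTop (nhds ((((x:ℝ)^n + (y:ℝ)^n) / (z:ℝ)^n))) := by
    intro x y z n hx hy hz hn
    set F : ℝ := ((x:ℝ)^n + (y:ℝ)^n) / (z:ℝ)^n with hF_def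
    have hF : 0 < F := by
      apply div_pos <;> positivity
    set K : ℝ := 4 * Real.pi ^ 3 * F / c ^ 5 with hK_def
    have hπ := Real.pi_pos
    have hK : 0 < K := by
      rw [hK_def]; positivity
    have hT : Tendsto (fun τ : ℝ => K * τ) atTop atTop :=
      Tendsto.const_mul_atTop hK tendsto_id
    have hLog : Tendsto (fun τ : ℝ => Real.log (K * τ)) atTop atTop :=
      Real.tendsto_log_atTop.comp hT
    set Q : ℝ → ℝ := fun T => (∫ t in T..(g T), zsq (1/2) t) / (∫ t in T..(g T), zsq σ t)
      with hQ_def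
    set r : ℝ → ℝ := fun T => MoserSum tν T / (1 / (4 * Real.pi ^ 3) * T * Real.log T ^ 5)
      with hr_def
    set s : ℝ → ℝ := fun T => Q T / (1/c * Real.log T) with hs_def
    -- r ∘ K tends to 1
    obtain ⟨C₁, hC₁⟩ := hmoser
    have hr1 : Tendsto (fun τ => r (K * τ)) atTop (nhds 1) := by
      have h0 : Tendsto (fun τ => r (K * τ) - 1) atTop (nhds 0) := by
        apply squeeze_zero_norm' (a := fun τ => C₁ / Real.log (K * τ))
        · exact hT.eventually hC₁
        · exact tendsto_const_nhds.div_atTop hLog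
      have := h0.add_const 1
      simpa using this
    -- s ∘ K tends to 1
    obtain ⟨C₂, hC₂⟩ := hquot
    have hs1 : Tendsto (fun τ => s (K * τ)) atTop (nhds 1) := by
      have h0 : Tendsto (fun τ => s (K * τ) - 1) atTop (nhds 0) := by
        apply squeeze_zero_norm' (a := fun τ => C₂ * c / Real.log (K * τ))
        · filter_upwards [hT.eventually hC₂, hLog.eventually_gt_atTop 0] with τ hq hL
          have hd : (0:ℝ) < 1/c * Real.log (K * τ) := by positivity
          have heq : C₂ * c / Real.log (K * τ) = C₂ / (1/c * Real.log (K * τ)) := by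
            field_simp
          rw [Real.norm_eq_abs, hs_def]
          simp only
          rw [div_sub_one (ne_of_gt hd), abs_div, abs_of_pos hd, heq]
          gcongr
        · exact tendsto_const_nhds.div_atTop hLog
      have := h0.add_const 1
      simpa using this
    -- combine
    have hfinal : Tendsto (fun τ => F * r (K * τ) * ((s (K * τ)) ^ 5)⁻¹) atTop (nhds F) := by
      have := (tendsto_const_nhds (x := F) (f := atTop)).mul hr1 |>.mul
        (((hs1.pow 5).inv₀ (by norm_num)))
      simpa using this
    apply hfinal.congr'
    filter_upwards [eventually_gt_atTop 0, hLog.eventually_gt_atTop 0] with τ hτ hL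
    rw [hr_def, hs_def, hQ_def]
    simp only
    rw [← alg _ _ _ _ _ _ _ (ne_of_gt hτ) (ne_of_gt hL) (ne_of_gt hc) (ne_of_gt hF)]
  -- the equivalence
  constructor
  · intro ha x y z n hx hy hz hn heq
    have hz' : ((z:ℝ))^n ≠ 0 := by positivity
    have hF1 : (((x:ℝ)^n + (y:ℝ)^n) / (z:ℝ)^n) = 1 := by
      rw [div_eq_one_iff_eq hz']
      exact_mod_cast heq
    have hk := key x y z n hx hy hz hn
    rw [show (nhds (((x:ℝ)^n + (y:ℝ)^n) / (z:ℝ)^n)) = nhds 1 from by rw [hF1]] at hk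
    exact ha x y z n hx hy hz hn hk
  · intro hb x y z n hx hy hz hn hTend
    have hE := key x y z n hx hy hz hn
    have hF1 : (((x:ℝ)^n + (y:ℝ)^n) / (z:ℝ)^n) = 1 := tendsto_nhds_unique hE hTend
    have hz' : ((z:ℝ))^n ≠ 0 := by positivity
    rw [div_eq_one_iff_eq hz'] at hF1
    exact hb x y z n hx hy hz hn (by exact_mod_cast hF1)
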